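/- arXiv:2004.12879 — 2 statements merged into one kernel-verified Lean document; each statement's English description precedes it below -/
import Mathlib

section
/- Let $\lambda$ be real with $0 < \lambda < 1/2$. Then there exists $\delta > 0$ such that for all real $\theta$ with $|\theta| < \delta$: $\log\left(1 - \left(\tfrac{1}{2}+\lambda\right)\left(1 - e^{-\mathrm{i}\theta}\right)\right) = -\mathrm{i}\theta + \overline{\log\left(1 - \left(\tfrac{1}{2}-\lambda\right)\left(1 - e^{-\mathrm{i}\theta}\right)\right)}$, where $\log$ denotes the principal complex logarithm and the bar denotes complex conjugation. -/
set_option maxHeartbeats 800000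

/-- Refined symmetry (Appendix B): for `0 < λ < 1/2` there is `δ > 0` such that for
`|θ| < δ`, `log(1 - (1/2+λ)(1-e^{-iθ})) = -iθ + conj(log(1 - (1/2-λ)(1-e^{-iθ})))`,
where `log` is the principal complex logarithm. -/
theorem stmt_14 (lam : ℝ) (h0 : 0 < lam) (h1 : lam < 1 / 2) :
    ∃ δ : ℝ, 0 < δ ∧ ∀ θ : ℝ, |θ| < δ →
      Complex.log (1 - ((1 / 2 : ℂ) + lam) * (1 - Complex.exp (-Complex.I * θ))) =
        -Complex.I * θ +
          (starRingEnd ℂ)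
            (Complex.log (1 - ((1 / 2 : ℂ) - lam) * (1 - Complex.exp (-Complex.I * θ)))) := by
  set w : ℝ → ℂ := fun θ => 1 - ((1 / 2 : ℂ) - lam) * (1 - Complex.exp (-Complex.I * θ)) with hw
  have hwcont : Continuous w := by fun_prop
  have hw0 : w 0 = 1 := by simp [hw]
  have hargcont : ContinuousAt (fun θ => Complex.arg (w θ)) 0 := by
    have h1 : ContinuousAt Complex.arg (w 0) := by
      rw [hw0]; exact Complex.continuousAt_arg (by simp [Complex.mem_slitPlane_iff])
    exact h1.comp hwcont.continuousAt
  have harg0 : Complex.arg (w 0) = 0 := by rw [hw0]; simp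
  have hpi : (0:ℝ) < Real.pi / 4 := by positivity
  obtain ⟨δ1, hδ1pos, hδ1⟩ := Metric.continuousAt_iff.mp hargcont (Real.pi / 4) hpi
  refine ⟨min δ1 (Real.pi / 2), lt_min hδ1pos (by positivity), fun θ hθ => ?_⟩
  have hθ1 : |θ| < δ1 := lt_of_lt_of_le hθ (min_le_left _ _)
  have hθ2 : |θ| < Real.pi / 2 := lt_of_lt_of_le hθ (min_le_right _ _)
  obtain ⟨hθ2a, hθ2b⟩ := abs_lt.mp hθ2
  have hargw : |Complex.arg (w θ)| < Real.pi / 4 := by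
    have := hδ1 (show dist θ 0 < δ1 by simpa [Real.dist_eq] using hθ1)
    rw [harg0] at this
    simpa [Real.dist_eq] using this
  obtain ⟨hargwa, hargwb⟩ := abs_lt.mp hargw
  have hpipos := Real.pi_pos
  have hwne : w θ ≠ 0 := by
    intro h
    have hX : ((1 / 2 : ℂ) - lam) * (1 - Complex.exp (-Complex.I * θ)) = 1 :=
      (sub_eq_zero.mp h).symm
    have habs1 : ‖((1 / 2 : ℂ) - lam)‖ = 1 / 2 - lam := by
      rw [show ((1 / 2 : ℂ) - lam) = ((1/2 - lam : ℝ) : ℂ) by push_cast; ring]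
      rw [Complex.norm_real, Real.norm_eq_abs, abs_of_pos (by linarith)]
    have habs2 : ‖(1 - Complex.exp (-Complex.I * θ))‖ ≤ 2 := by
      calc ‖(1 - Complex.exp (-Complex.I * θ))‖
          ≤ ‖(1:ℂ)‖ + ‖Complex.exp (-Complex.I * θ)‖ :=
            norm_sub_le _ _
        _ ≤ 2 := by
            rw [show -Complex.I * θ = (-θ : ℝ) * Complex.I by push_cast; ring,
              Complex.norm_exp_ofReal_mul_I]
            norm_num
    have h2 := congrArg (fun z : ℂ => ‖z‖) hX
    rw [norm_mul, habs1, norm_one] at h2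
    nlinarith [norm_nonneg (1 - Complex.exp (-Complex.I * θ))]
  have hexpne : Complex.exp (-Complex.I * θ) ≠ 0 := Complex.exp_ne_zero _
  have hconjne : (starRingEnd ℂ) (w θ) ≠ 0 := by simpa using hwne
  have hkey : 1 - ((1 / 2 : ℂ) + lam) * (1 - Complex.exp (-Complex.I * θ)) =
      Complex.exp (-Complex.I * θ) * (starRingEnd ℂ) (w θ) := by
    have hconjexp : (starRingEnd ℂ) (Complex.exp (-Complex.I * θ)) =
        Complex.exp (Complex.I * θ) := by
      rw [← Complex.exp_conj]; congr 1
      simp [Complex.conj_ofReal]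
    have hmul : Complex.exp (-Complex.I * θ) * Complex.exp (Complex.I * θ) = 1 := by
      rw [← Complex.exp_add]; ring_nf; exact Complex.exp_zero
    simp only [hw, map_sub, map_mul, map_one, map_div₀, map_ofNat, hconjexp,
      Complex.conj_ofReal]
    linear_combination ((lam:ℂ) - 1/2) * hmul
  have hargexp : Complex.arg (Complex.exp (-Complex.I * θ)) = -θ := by
    rw [show -Complex.I * (θ:ℂ) = ((-θ : ℝ) : ℂ) * Complex.I by push_cast; ring,
      Complex.exp_mul_I]
    exact Complex.arg_cos_add_sin_mul_I ⟨by linarith, by linarith⟩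
  have hargne : Complex.arg (w θ) ≠ Real.pi := by
    intro h; rw [h] at hargwb; linarith
  have hargconj : Complex.arg ((starRingEnd ℂ) (w θ)) = -Complex.arg (w θ) := by
    rw [Complex.arg_conj, if_neg hargne]
  rw [hkey, Complex.log_mul hexpne hconjne, Complex.log_exp, Complex.log_conj _ hargne]
  · rw [show (-Complex.I * (θ:ℂ)).im = -θ by simp]; linarith
  · rw [show (-Complex.I * (θ:ℂ)).im = -θ by simp]; linarith
  · rw [hargexp, hargconj]
    exact ⟨by linarith, by linarith⟩
end

section
/- The power series $\sum_{n=1}^{\infty} a_n x^{2n}$ with coefficients $a_n = \frac{(-1)^n\,(2^{2n}-1)\, B_{2n}}{n\,(2n)!}$ (where $B_{2n}$ is the $2n$-th Bernoulli number) converges to $2\ln(\cos(x/2))$ for every real $x$ with $|x| < \pi$, and its radius of convergence is exactly $\pi$: it diverges for every real $x$ with $|x| > \pi$. -/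
open Real Filter Finset

private noncomputable def zv (m : ℕ) : ℝ :=
  (-1 : ℝ) ^ (m + 1) * (2 : ℝ) ^ (2 * m - 1) * π ^ (2 * m) *
    ((bernoulli (2 * m) : ℚ) : ℝ) / ((2 * m).factorial : ℝ)

private lemma hasSum_zv (m : ℕ) (hm : m ≠ 0) :
    HasSum (fun n : ℕ => 1 / ((n : ℝ) + 1) ^ (2 * m)) (zv m) := by
  have h := hasSum_zeta_nat (k := m) hm
  rw [← hasSum_nat_add_iff' 1] at h
  simpa [zv, zero_pow (by omega : 2 * m ≠ 0)] using h

private lemma one_le_zv (m : ℕ) (hm : m ≠ 0) : 1 ≤ zv m := by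
  have h := hasSum_zv m hm
  have := le_hasSum h 0 (fun j _ => by positivity)
  simpa using this

private lemma hasSum_log_sin {t : ℝ} (ht : |t| < 1) (ht0 : t ≠ 0) :
    HasSum (fun n : ℕ => -Real.log (1 - t ^ 2 / ((n : ℝ) + 1) ^ 2))
      (-Real.log (Real.sin (π * t) / (π * t))) := by
  have hfac : ∀ n : ℕ, 0 < 1 - t ^ 2 / ((n : ℝ) + 1) ^ 2 := by
    intro n
    have h1 : t ^ 2 < 1 := by
      have := abs_lt.mp ht; nlinarith [sq_abs t, abs_nonneg t]
    have h2 : (1 : ℝ) ≤ ((n : ℝ) + 1) ^ 2 := by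
      have : (1 : ℝ) ≤ (n : ℝ) + 1 := by
        have := Nat.cast_nonneg (α := ℝ) n; linarith
      nlinarith
    have : t ^ 2 / ((n : ℝ) + 1) ^ 2 ≤ t ^ 2 := by
      apply div_le_of_le_mul₀ <;> nlinarith [sq_nonneg t]
    linarith
  have hL : 0 < Real.sin (π * t) / (π * t) := by
    rcases lt_or_gt_of_ne ht0 with h | h
    · have h1 : -π < π * t := by nlinarith [Real.pi_pos, abs_lt.mp ht]
      have h2 : π * t < 0 := by nlinarith [Real.pi_pos]
      have := Real.sin_neg_of_neg_of_neg_pi_lt h2 (by linarith)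
      exact div_pos_of_neg_of_neg this h2
    · have h1 : π * t < π := by nlinarith [Real.pi_pos, abs_lt.mp ht]
      have h2 : 0 < π * t := by nlinarith [Real.pi_pos]
      exact div_pos (Real.sin_pos_of_pos_of_lt_pi h2 h1) h2
  have hπ : (π : ℝ) ≠ 0 := Real.pi_ne_zero
  have hπt : (π * t) ≠ 0 := mul_ne_zero hπ ht0
  have hprod : Tendsto (fun n : ℕ => ∏ j ∈ Finset.range n, ((1 : ℝ) - t ^ 2 / ((j : ℝ) + 1) ^ 2))
      atTop (nhds (Real.sin (π * t) / (π * t))) := by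
    have h := Real.tendsto_euler_sin_prod t
    have := h.div_const (π * t)
    refine this.congr fun n => ?_
    field_simp
  have hlog : Tendsto (fun n : ℕ => ∑ j ∈ Finset.range n, Real.log (1 - t ^ 2 / ((j : ℝ) + 1) ^ 2))
      atTop (nhds (Real.log (Real.sin (π * t) / (π * t)))) := by
    have hc : Tendsto Real.log (nhds (Real.sin (π * t) / (π * t)))
        (nhds (Real.log (Real.sin (π * t) / (π * t)))) :=
      (Real.continuousAt_log hL.ne').tendsto
    refine (hc.comp hprod).congr fun n => ?_
    simp only [Function.comp_apply]
    rw [Real.log_prod]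
    exact fun j _ => (hfac j).ne'
  have hneg : Tendsto (fun n : ℕ => ∑ j ∈ Finset.range n, -Real.log (1 - t ^ 2 / ((j : ℝ) + 1) ^ 2))
      atTop (nhds (-Real.log (Real.sin (π * t) / (π * t)))) := by
    simpa [Finset.sum_neg_distrib] using hlog.neg
  have hnonneg : ∀ n : ℕ, 0 ≤ -Real.log (1 - t ^ 2 / ((n : ℝ) + 1) ^ 2) := by
    intro n
    have : Real.log (1 - t ^ 2 / ((n : ℝ) + 1) ^ 2) ≤ 0 := by
      apply Real.log_nonpos (le_of_lt (hfac n))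
      have : 0 ≤ t ^ 2 / ((n : ℝ) + 1) ^ 2 := by positivity
      linarith
    linarith
  have hsummable : Summable (fun n : ℕ => -Real.log (1 - t ^ 2 / ((n : ℝ) + 1) ^ 2)) := by
    apply summable_of_sum_range_le hnonneg
    intro n
    have hmono : Monotone (fun n : ℕ =>
        ∑ j ∈ Finset.range n, -Real.log (1 - t ^ 2 / ((j : ℝ) + 1) ^ 2)) := by
      intro a b hab
      apply Finset.sum_le_sum_of_subset_of_nonneg (Finset.range_subset_range.mpr hab)
      intro i _ _; exact hnonneg i
    exact hmono.ge_of_tendsto hneg n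
  exact (Summable.hasSum_iff_tendsto_nat hsummable).mpr hneg

private lemma core {t : ℝ} (ht : |t| < 1) (ht0 : t ≠ 0) :
    HasSum (fun k : ℕ => zv (k + 1) * t ^ (2 * (k + 1)) / ((k : ℝ) + 1))
      (-Real.log (Real.sin (π * t) / (π * t))) := by
  have ht2 : t ^ 2 < 1 := by
    have := abs_lt.mp ht; nlinarith [sq_abs t, abs_nonneg t]
  set g : ℕ × ℕ → ℝ := fun p => (t ^ 2 / ((p.1 : ℝ) + 1) ^ 2) ^ (p.2 + 1) / ((p.2 : ℝ) + 1)
    with hg_def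
  have hy : ∀ n : ℕ, 0 ≤ t ^ 2 / ((n : ℝ) + 1) ^ 2 ∧ t ^ 2 / ((n : ℝ) + 1) ^ 2 < 1 := by
    intro n
    constructor
    · positivity
    · have h2 : (1 : ℝ) ≤ ((n : ℝ) + 1) ^ 2 := by
        have := Nat.cast_nonneg (α := ℝ) n; nlinarith
      have : t ^ 2 / ((n : ℝ) + 1) ^ 2 ≤ t ^ 2 := by
        apply div_le_of_le_mul₀ <;> nlinarith [sq_nonneg t]
      linarith
  have hfiber1 : ∀ n : ℕ, HasSum (fun k : ℕ => g (n, k))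
      (-Real.log (1 - t ^ 2 / ((n : ℝ) + 1) ^ 2)) := by
    intro n
    have := hasSum_pow_div_log_of_abs_lt_one
      (x := t ^ 2 / ((n : ℝ) + 1) ^ 2) (by rw [abs_of_nonneg (hy n).1]; exact (hy n).2)
    exact this
  have hgnonneg : 0 ≤ g := by
    intro p
    have := (hy p.1).1
    simp only [hg_def]
    positivity
  have hsumg : Summable g := by
    rw [summable_prod_of_nonneg hgnonneg]
    constructor
    · exact fun n => (hfiber1 n).summable
    · refine (hasSum_log_sin ht ht0).summable.congr fun n => ?_
      exact ((hfiber1 n).tsum_eq).symm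
  have hgL : HasSum g (-Real.log (Real.sin (π * t) / (π * t))) := by
    have h1 : HasSum (fun n : ℕ => -Real.log (1 - t ^ 2 / ((n : ℝ) + 1) ^ 2)) (∑' p, g p) :=
      HasSum.prod_fiberwise hsumg.hasSum hfiber1
    have h2 := hsumg.hasSum
    rwa [h1.unique (hasSum_log_sin ht ht0)] at h2
  have hswap : HasSum (fun p : ℕ × ℕ => g (p.2, p.1))
      (-Real.log (Real.sin (π * t) / (π * t))) :=
    (Equiv.prodComm ℕ ℕ).hasSum_iff.mpr hgL
  refine HasSum.prod_fiberwise hswap fun k => ?_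
  have h := (hasSum_zv (k + 1) (Nat.succ_ne_zero k)).mul_left
    (t ^ (2 * (k + 1)) / ((k : ℝ) + 1))
  have he : (fun n : ℕ => t ^ (2 * (k + 1)) / ((k : ℝ) + 1) * (1 / ((n : ℝ) + 1) ^ (2 * (k + 1))))
      = fun n => g (n, k) := by
    funext n
    show _ = (t ^ 2 / ((n : ℝ) + 1) ^ 2) ^ (k + 1) / ((k : ℝ) + 1)
    rw [div_pow, ← pow_mul, ← pow_mul]
    ring
  rw [he] at h
  convert h using 1
  · rfl
  · ring

private lemma coef_eq (x : ℝ) (k : ℕ) :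
    ((-1) ^ (k + 1) * ((2 : ℝ) ^ (2 * (k + 1)) - 1) * ((bernoulli (2 * (k + 1)) : ℚ) : ℝ) /
        (((k : ℝ) + 1) * ((2 * (k + 1)).factorial : ℝ))) * x ^ (2 * (k + 1)) =
    2 * (zv (k + 1) * (x / (2 * π)) ^ (2 * (k + 1)) / ((k : ℝ) + 1)
        - zv (k + 1) * (x / π) ^ (2 * (k + 1)) / ((k : ℝ) + 1)) := by
  have hπ : (π : ℝ) ≠ 0 := Real.pi_ne_zero
  have hfac : ((2 * (k + 1)).factorial : ℝ) ≠ 0 :=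
    Nat.cast_ne_zero.mpr (Nat.factorial_ne_zero _)
  have hk : ((k : ℝ) + 1) ≠ 0 := by positivity
  rw [zv, show 2 * (k + 1) - 1 = 2 * k + 1 from by omega]
  simp only [div_pow, mul_pow]
  field_simp
  ring

/-- Appendix A, `λ₂ = 1/4`: the series `∑_{n≥1} a_n x^{2n}` with
`a_n = (-1)^n (2^{2n}-1) B_{2n} / (n (2n)!)` converges to `2 ln(cos(x/2))` for
`|x| < π`, and it diverges for `|x| > π` (so its radius of convergence is exactly `π`). -/
theorem stmt_18 :
    (∀ x : ℝ, |x| < Real.pi →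
      HasSum (fun n : ℕ =>
        ((-1) ^ (n + 1) * ((2 : ℝ) ^ (2 * (n + 1)) - 1) *
            ((bernoulli (2 * (n + 1)) : ℚ) : ℝ) /
          (((n : ℝ) + 1) * ((2 * (n + 1)).factorial : ℝ))) * x ^ (2 * (n + 1)))
        (2 * Real.log (Real.cos (x / 2)))) ∧
    (∀ x : ℝ, Real.pi < |x| →
      ¬ Summable (fun n : ℕ =>
        ((-1) ^ (n + 1) * ((2 : ℝ) ^ (2 * (n + 1)) - 1) *
            ((bernoulli (2 * (n + 1)) : ℚ) : ℝ) /
          (((n : ℝ) + 1) * ((2 * (n + 1)).factorial : ℝ))) * x ^ (2 * (n + 1)))) := by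
  have hπ0 : (0 : ℝ) < π := Real.pi_pos
  have hπ : (π : ℝ) ≠ 0 := Real.pi_ne_zero
  constructor
  · intro x hx
    rcases eq_or_ne x 0 with rfl | hx0
    · have hzero : ∀ n : ℕ, (0 : ℝ) ^ (2 * (n + 1)) = 0 := fun n => zero_pow (by omega)
      simpa [hzero] using hasSum_zero
    · -- x ≠ 0 case
      have ht : |x / π| < 1 := by
        rw [abs_div, abs_of_pos hπ0, div_lt_one hπ0]; exact hx
      have ht0 : x / π ≠ 0 := div_ne_zero hx0 hπ
      have h2π : (0 : ℝ) < 2 * π := by positivity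
      have hs : |x / (2 * π)| < 1 := by
        rw [abs_div, abs_of_pos h2π, div_lt_one h2π]
        nlinarith [abs_nonneg x]
      have hs0 : x / (2 * π) ≠ 0 := div_ne_zero hx0 (ne_of_gt h2π)
      have h1 := core ht ht0
      have h2 := core hs hs0
      rw [show π * (x / π) = x from by field_simp] at h1
      rw [show π * (x / (2 * π)) = x / 2 from by field_simp] at h2
      have hsum := (h2.sub h1).mul_left 2
      -- value equality
      have hcosx : 0 < Real.cos (x / 2) := by
        apply Real.cos_pos_of_mem_Ioo
        constructor <;> [nlinarith [abs_lt.mp hx]; nlinarith [abs_lt.mp hx]]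
      have hx2 : |x / 2| < π := by
        rw [abs_div]; simp only [abs_two]
        nlinarith [abs_nonneg x]
      have hsinc : ∀ y : ℝ, |y| < π → y ≠ 0 → 0 < Real.sin y / y := by
        intro y hy hy0
        rcases lt_or_gt_of_ne hy0 with h | h
        · have := Real.sin_neg_of_neg_of_neg_pi_lt h (by nlinarith [abs_lt.mp hy])
          exact div_pos_of_neg_of_neg this h
        · exact div_pos (Real.sin_pos_of_pos_of_lt_pi h (by nlinarith [abs_lt.mp hy])) h
      have hsx2 : 0 < Real.sin (x / 2) / (x / 2) :=
        hsinc (x / 2) hx2 (by simpa using hx0)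
      have hval : 2 * (-Real.log (Real.sin (x / 2) / (x / 2)) -
          -Real.log (Real.sin x / x)) = 2 * Real.log (Real.cos (x / 2)) := by
        have hfact : Real.sin x / x = Real.sin (x / 2) / (x / 2) * Real.cos (x / 2) := by
          have h2s : Real.sin x = 2 * Real.sin (x / 2) * Real.cos (x / 2) := by
            conv_lhs => rw [show x = 2 * (x / 2) from by ring]
            rw [Real.sin_two_mul]
          rw [h2s]
          field_simp
          all_goals tauto
        rw [hfact, Real.log_mul hsx2.ne' hcosx.ne']
        ring
      rw [hval] at hsum
      simpa only [coef_eq x] using hsum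
  · intro x hx hs
    have hx0 : x ≠ 0 := by
      intro h; rw [h] at hx; simp at hx; linarith
    set r : ℝ := x ^ 2 / π ^ 2 with hr_def
    have hr1 : 1 < r := by
      rw [hr_def, lt_div_iff₀ (by positivity)]
      nlinarith [sq_abs x, abs_nonneg x]
    have hr0 : 0 < r := by linarith
    -- lower bound on terms
    have hlow : ∀ k : ℕ, (3 / 2) * (r ^ (k + 1) / ((k : ℝ) + 1)) ≤
        |((-1) ^ (k + 1) * ((2 : ℝ) ^ (2 * (k + 1)) - 1) *
            ((bernoulli (2 * (k + 1)) : ℚ) : ℝ) /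
          (((k : ℝ) + 1) * ((2 * (k + 1)).factorial : ℝ))) * x ^ (2 * (k + 1))| := by
      intro k
      rw [coef_eq x]
      have e1 : (x / π) ^ (2 * (k + 1)) = r ^ (k + 1) := by
        have h : r = (x / π) ^ 2 := by rw [hr_def, div_pow]
        rw [h, ← pow_mul]
      have e2 : (x / (2 * π)) ^ (2 * (k + 1)) = (r / 4) ^ (k + 1) := by
        have h : r / 4 = (x / (2 * π)) ^ 2 := by
          rw [hr_def]
          field_simp
          ring
        rw [h, ← pow_mul]
      rw [e1, e2]
      have hzv := one_le_zv (k + 1) (Nat.succ_ne_zero k)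
      have hm : (0 : ℝ) < (k : ℝ) + 1 := by positivity
      have hB0 : (0 : ℝ) ≤ r ^ (k + 1) := by positivity
      have hq : (r / 4) ^ (k + 1) ≤ r ^ (k + 1) / 4 := by
        rw [div_pow]
        apply div_le_div_of_nonneg_left hB0 (by norm_num)
        calc (4 : ℝ) = 4 ^ 1 := by norm_num
          _ ≤ 4 ^ (k + 1) := by
            apply pow_le_pow_right₀ (by norm_num) (by omega)
      set Z := zv (k + 1) with hZ
      set A := (r / 4) ^ (k + 1) with hA
      set B := r ^ (k + 1) with hB
      have hAB : A ≤ B := le_trans hq (by linarith)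
      have hnp : 2 * (Z * A / ((k : ℝ) + 1) - Z * B / ((k : ℝ) + 1)) ≤ 0 := by
        have h1 : Z * A / ((k : ℝ) + 1) ≤ Z * B / ((k : ℝ) + 1) := by
          gcongr <;> linarith
        linarith
      rw [abs_of_nonpos hnp]
      have key : (3 / 2) * B ≤ 2 * (Z * B - Z * A) := by
        nlinarith [mul_nonneg (sub_nonneg.mpr hzv) (by linarith : (0 : ℝ) ≤ B - A)]
      calc (3 / 2) * (B / ((k : ℝ) + 1)) = ((3 / 2) * B) / ((k : ℝ) + 1) := by ring
        _ ≤ (2 * (Z * B - Z * A)) / ((k : ℝ) + 1) := by gcongr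
        _ = -(2 * (Z * A / ((k : ℝ) + 1) - Z * B / ((k : ℝ) + 1))) := by ring
    -- now derive a contradiction
    have h0 : Tendsto (fun k : ℕ =>
        |((-1) ^ (k + 1) * ((2 : ℝ) ^ (2 * (k + 1)) - 1) *
            ((bernoulli (2 * (k + 1)) : ℚ) : ℝ) /
          (((k : ℝ) + 1) * ((2 * (k + 1)).factorial : ℝ))) * x ^ (2 * (k + 1))|)
        atTop (nhds 0) := by
      simpa using hs.tendsto_atTop_zero.abs
    have hinv : ‖(1 / r : ℝ)‖ < 1 := by
      rw [Real.norm_eq_abs, abs_of_pos (by positivity)]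
      rw [div_lt_one hr0]
      linarith
    have hu : Tendsto (fun n : ℕ => (n : ℝ) ^ 1 * (1 / r) ^ n) atTop (nhds 0) :=
      (summable_pow_mul_geometric_of_norm_lt_one 1 hinv).tendsto_atTop_zero
    have hv : Tendsto (fun k : ℕ => ((k : ℝ) + 1) * (1 / r) ^ (k + 1)) atTop (nhds 0) := by
      have := hu.comp (tendsto_add_atTop_nat 1)
      refine this.congr fun k => ?_
      simp [Function.comp]
    have hev1 := hv.eventually_lt_const one_pos
    have hev2 := h0.eventually_lt_const one_pos
    obtain ⟨k, h1k, h2k⟩ := (hev1.and hev2).exists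
    have hrp : (0 : ℝ) < r ^ (k + 1) := by positivity
    have hlt : (k : ℝ) + 1 < r ^ (k + 1) := by
      have heq : ((k : ℝ) + 1) / r ^ (k + 1) = ((k : ℝ) + 1) * (1 / r) ^ (k + 1) := by
        rw [one_div, inv_pow, div_eq_mul_inv]
      have hlt1 : ((k : ℝ) + 1) / r ^ (k + 1) < 1 := by rw [heq]; exact h1k
      exact (div_lt_one hrp).mp hlt1
    have hgt1 : (1 : ℝ) < r ^ (k + 1) / ((k : ℝ) + 1) :=
      (one_lt_div (by positivity)).mpr hlt
    have := hlow k
    linarith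
end
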